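/- Let ε ∈ (0,1), γ ∈ (1/2, 1) and β > 0. Then for every s ∈ [log ε, 0], ∫_{log ε − s}^0 β e^{(1−γ)p} ( ∫_0^{−(s+p)} (γ+β) e^{γ q} e^{−(1−γ)(s+p+q)} dq ) dp ≤ (β(γ+β)/(2γ−1)²) · ε^{1−2γ} · e^{−(1−γ)s}. -/

import Mathlib

open MeasureTheory

private lemma int_exp_mul (c a b : ℝ) (hc : c ≠ 0) :
    ∫ x in a..b, Real.exp (c * x) = (Real.exp (c * b) - Real.exp (c * a)) / c := by
  have h := intervalIntegral.integral_comp_mul_left (a := a) (b := b) (c := c)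
    (fun x => Real.exp x) hc
  simp only [integral_exp, smul_eq_mul] at h
  rw [h]
  field_simp

/-- For `ε ∈ (0,1)`, `γ ∈ (1/2,1)`, `β > 0` and `s ∈ [log ε, 0]`,
`∫_{log ε − s}^0 β e^{(1−γ)p} (∫_0^{−(s+p)} (γ+β) e^{γq} e^{−(1−γ)(s+p+q)} dq) dp
 ≤ (β(γ+β)/(2γ−1)²) ε^{1−2γ} e^{−(1−γ)s}`. -/
theorem two_step_operator_estimate (ε γ β : ℝ) (hε : ε ∈ Set.Ioo (0 : ℝ) 1)
    (hγ : γ ∈ Set.Ioo (1 / 2 : ℝ) 1) (hβ : 0 < β) :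
    ∀ s ∈ Set.Icc (Real.log ε) (0 : ℝ),
      (∫ p in (Real.log ε - s)..(0 : ℝ), β * Real.exp ((1 - γ) * p) *
          ∫ q in (0 : ℝ)..(-(s + p)),
            (γ + β) * Real.exp (γ * q) * Real.exp (-(1 - γ) * (s + p + q)))
        ≤ β * (γ + β) / (2 * γ - 1) ^ 2 * ε ^ (1 - 2 * γ) * Real.exp (-(1 - γ) * s) := by
  obtain ⟨hε0, hε1⟩ := hε
  obtain ⟨hγ1, hγ2⟩ := hγ
  intro s hs
  obtain ⟨hs1, hs2⟩ := hs
  have hcpos : 0 < 2 * γ - 1 := by linarith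
  have hcne : (2 * γ - 1) ≠ 0 := ne_of_gt hcpos
  -- inner integral computation
  have hinner : ∀ p : ℝ,
      (∫ q in (0:ℝ)..(-(s + p)), (γ + β) * Real.exp (γ * q) * Real.exp (-(1 - γ) * (s + p + q)))
      = (γ + β) * Real.exp (-(1 - γ) * (s + p)) *
          ((Real.exp ((2 * γ - 1) * (-(s + p))) - 1) / (2 * γ - 1)) := by
    intro p
    have h : ∀ q : ℝ, (γ + β) * Real.exp (γ * q) * Real.exp (-(1 - γ) * (s + p + q))
        = ((γ + β) * Real.exp (-(1 - γ) * (s + p))) * Real.exp ((2 * γ - 1) * q) := by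
      intro q
      rw [mul_assoc, ← Real.exp_add, mul_assoc, ← Real.exp_add]
      ring_nf
    simp_rw [h]
    rw [intervalIntegral.integral_const_mul, int_exp_mul _ _ _ hcne, mul_zero, Real.exp_zero]
  -- simplify the outer integrand
  have hpt : ∀ p : ℝ,
      β * Real.exp ((1 - γ) * p) *
        ((γ + β) * Real.exp (-(1 - γ) * (s + p)) *
          ((Real.exp ((2 * γ - 1) * (-(s + p))) - 1) / (2 * γ - 1)))
      = (β * (γ + β) / (2 * γ - 1) * Real.exp (-(1 - γ) * s)) *
          (Real.exp (-(2 * γ - 1) * (s + p)) - 1) := by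
    intro p
    have h1 : Real.exp ((1 - γ) * p) * Real.exp (-(1 - γ) * (s + p))
        = Real.exp (-(1 - γ) * s) := by
      rw [← Real.exp_add]; ring_nf
    have h2 : Real.exp ((2 * γ - 1) * (-(s + p))) = Real.exp (-(2 * γ - 1) * (s + p)) := by
      ring_nf
    rw [h2, show β * Real.exp ((1 - γ) * p) *
        ((γ + β) * Real.exp (-(1 - γ) * (s + p)) *
          ((Real.exp (-(2 * γ - 1) * (s + p)) - 1) / (2 * γ - 1)))
      = (β * (γ + β) / (2 * γ - 1)) *
          (Real.exp ((1 - γ) * p) * Real.exp (-(1 - γ) * (s + p))) *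
          (Real.exp (-(2 * γ - 1) * (s + p)) - 1) from by ring, h1]
  -- compute the outer integral
  have houter :
      (∫ p in (Real.log ε - s)..(0 : ℝ), β * Real.exp ((1 - γ) * p) *
          ∫ q in (0 : ℝ)..(-(s + p)),
            (γ + β) * Real.exp (γ * q) * Real.exp (-(1 - γ) * (s + p + q)))
      = (β * (γ + β) / (2 * γ - 1) * Real.exp (-(1 - γ) * s)) *
          ((Real.exp (-(2 * γ - 1) * Real.log ε) - Real.exp (-(2 * γ - 1) * s)) / (2 * γ - 1)
            + (Real.log ε - s)) := by
    simp_rw [hinner, hpt]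
    rw [intervalIntegral.integral_const_mul]
    congr 1
    have hInt1 : IntervalIntegrable (fun p => Real.exp (-(2 * γ - 1) * (s + p)))
        volume (Real.log ε - s) 0 :=
      (Real.continuous_exp.comp (by continuity)).intervalIntegrable _ _
    have hInt2 : IntervalIntegrable (fun _ : ℝ => (1:ℝ)) volume (Real.log ε - s) 0 :=
      intervalIntegrable_const
    rw [intervalIntegral.integral_sub hInt1 hInt2]
    have hcomp : (∫ p in (Real.log ε - s)..(0:ℝ), Real.exp (-(2 * γ - 1) * (s + p)))
        = ∫ x in (s + (Real.log ε - s))..(s + (0:ℝ)), Real.exp (-(2 * γ - 1) * x) :=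
      intervalIntegral.integral_comp_add_left (fun x => Real.exp (-(2 * γ - 1) * x)) s
    rw [hcomp]
    have h3 : s + (Real.log ε - s) = Real.log ε := by ring
    have h4 : -(2 * γ - 1) ≠ 0 := by intro h; apply hcne; linarith
    rw [h3, add_zero, int_exp_mul _ _ _ h4, intervalIntegral.integral_const]
    simp only [smul_eq_mul, mul_one, sub_zero]
    have h5 : (1 : ℝ) - 2 * γ ≠ 0 := by intro h; apply hcne; linarith
    field_simp [h5]
    ring
  rw [houter]
  have hA : ε ^ (1 - 2 * γ) = Real.exp (-(2 * γ - 1) * Real.log ε) := by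
    rw [Real.rpow_def_of_pos hε0]
    congr 1
    ring
  rw [hA, ← sub_nonneg]
  have key : β * (γ + β) / (2 * γ - 1) ^ 2 * Real.exp (-(2 * γ - 1) * Real.log ε) *
        Real.exp (-(1 - γ) * s)
      - (β * (γ + β) / (2 * γ - 1) * Real.exp (-(1 - γ) * s)) *
          ((Real.exp (-(2 * γ - 1) * Real.log ε) - Real.exp (-(2 * γ - 1) * s)) / (2 * γ - 1)
            + (Real.log ε - s))
      = (β * (γ + β) / (2 * γ - 1) * Real.exp (-(1 - γ) * s)) *
          (Real.exp (-(2 * γ - 1) * s) / (2 * γ - 1) + (s - Real.log ε)) := by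
    generalize 2 * γ - 1 = c
    ring
  rw [key]
  have hC : 0 ≤ β * (γ + β) / (2 * γ - 1) * Real.exp (-(1 - γ) * s) := by
    have h5 : 0 < γ + β := by linarith
    positivity
  have h1 : 0 ≤ Real.exp (-(2 * γ - 1) * s) / (2 * γ - 1) + (s - Real.log ε) := by
    have h6 : 0 < Real.exp (-(2 * γ - 1) * s) / (2 * γ - 1) := by positivity
    linarith
  exact mul_nonneg hC h1
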